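/- Let S be a colored string of length n. For any fixed color y, delay d, and position j, there is at most one minimally (y,d)-unique substring of S whose occurrences include one ending at position j. Consequently, the total number of pairs (T,d) with T a minimally (y,d)-unique substring of S, over all colors y and all delays d ∈ {0,...,n}, is O(n²) (at most (n+1)·n pairs counting each distinct substring once per delay). -/
import Mathlib


variable {α γ : Type*}

/-- `occAt S T i` : the string `T` occurs in `S` at (1-based) position `i`. -/
def occAt (S T : List α) (i : ℕ) : Prop := 1 ≤ i ∧ T <+: S.drop (i - 1)

/-- The occurrence of `T` at position `i` is `(y,d)`-good: the color at distance `d`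
after the end position `i + |T| - 1` is `y`. -/
def goodOcc (f : ℕ → γ) (T : List α) (y : γ) (d i : ℕ) : Prop :=
  f (i + T.length - 1 + d) = y

/-- `T` is `(y,d)`-unique in the colored string `(S, f)`: every occurrence is
`(y,d)`-good or its color position lies beyond the end of the string. -/
def ydUnique (S : List α) (f : ℕ → γ) (T : List α) (y : γ) (d : ℕ) : Prop :=
  ∀ i, occAt S T i → (goodOcc f T y d i ∨ i + T.length - 1 + d > S.length)

/-- `T` is minimally `(y,d)`-unique: it is `(y,d)`-unique and no proper substring
`U = T[i..j]` of `T` is `(y, d + |T| - j)`-unique. -/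
def minYdUnique (S : List α) (f : ℕ → γ) (T : List α) (y : γ) (d : ℕ) : Prop :=
  ydUnique S f T y d ∧
  ∀ i j : ℕ, 1 ≤ i → i ≤ j → j ≤ T.length → ¬(i = 1 ∧ j = T.length) →
    ¬ ydUnique S f ((T.drop (i - 1)).take (j - i + 1)) y (d + T.length - j)

lemma occAt_end_le {S T : List α} {i : ℕ} (h : occAt S T i) (hne : T ≠ []) :
    i - 1 + T.length ≤ S.length := by
  obtain ⟨h1, h2⟩ := h
  have := h2.length_le
  rw [List.length_drop] at this
  have := List.length_pos_iff.mpr hne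
  omega

lemma eq_of_same_end_same_len {S T₁ T₂ : List α} {i₁ i₂ : ℕ}
    (h₁ : occAt S T₁ i₁) (h₂ : occAt S T₂ i₂) (hl : T₁.length = T₂.length)
    (he : i₁ + T₁.length = i₂ + T₂.length) : T₁ = T₂ := by
  obtain ⟨hi₁, hp₁⟩ := h₁
  obtain ⟨hi₂, hp₂⟩ := h₂
  have hii : i₁ = i₂ := by omega
  subst hii
  exact (List.prefix_of_prefix_length_le hp₁ hp₂ hl.le).eq_of_length hl

lemma occAt_drop {S T : List α} {i k : ℕ} (h : occAt S T i) (hk : k ≤ T.length) :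
    occAt S (T.drop k) (i + k) := by
  obtain ⟨hi, r, hr⟩ := h
  refine ⟨by omega, ?_⟩
  have hd : S.drop (i + k - 1) = (S.drop (i - 1)).drop k := by
    rw [List.drop_drop]
    congr 1
    omega
  rw [hd, ← hr, List.drop_append_of_le_length hk]
  exact ⟨r, rfl⟩

lemma suffix_eq {S T₁ T₂ : List α} {i₁ i₂ : ℕ}
    (h₁ : occAt S T₁ i₁) (h₂ : occAt S T₂ i₂)
    (hl : T₁.length ≤ T₂.length)
    (he : i₁ + T₁.length = i₂ + T₂.length) :
    T₁ = T₂.drop (T₂.length - T₁.length) := by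
  have h₂' := occAt_drop h₂ (Nat.sub_le T₂.length T₁.length)
  have hlen : (T₂.drop (T₂.length - T₁.length)).length = T₁.length := by
    rw [List.length_drop]; omega
  have hii : i₁ + T₁.length = i₂ + (T₂.length - T₁.length) + (T₂.drop (T₂.length - T₁.length)).length := by
    rw [hlen]; omega
  exact eq_of_same_end_same_len h₁ h₂' hlen.symm hii

lemma not_unique_of_min_suffix {S : List α} {f : ℕ → γ} {T : List α} {y : γ} {d k : ℕ}
    (hm : minYdUnique S f T y d) (hk : 1 ≤ k) (hk2 : k < T.length) :
    ¬ ydUnique S f (T.drop k) y d := by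
  have h := hm.2 (k + 1) T.length (by omega) (by omega) le_rfl (by omega)
  have e1 : k + 1 - 1 = k := by omega
  have e2 : T.length - (k + 1) + 1 = T.length - k := by omega
  have e3 : (T.drop k).take (T.length - k) = T.drop k := by
    apply List.take_of_length_le
    rw [List.length_drop]
  have e4 : d + T.length - T.length = d := by omega
  rwa [e1, e2, e3, e4] at h

lemma color_forced {S : List α} {f : ℕ → γ} {T : List α} {y : γ} {d i : ℕ}
    (hu : ydUnique S f T y d) (ho : occAt S T i)
    (hle : i + T.length - 1 + d ≤ S.length) :
    f (i + T.length - 1 + d) = y := by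
  rcases hu i ho with h | h
  · exact h
  · omega

lemma exists_occ_of_infix {S T : List α} (h : T <:+: S) : ∃ i, occAt S T i := by
  obtain ⟨s, t, hst⟩ := h
  refine ⟨s.length + 1, Nat.le_add_left 1 s.length, ?_⟩
  have : S.drop (s.length + 1 - 1) = T ++ t := by
    rw [Nat.add_sub_cancel, ← hst, List.append_assoc, List.drop_left]
  rw [this]
  exact ⟨t, rfl⟩

/-- Key lemma for the first part: with the same color, same delay and occurrences
ending at the same position, two minimally unique substrings coincide
(proved under a wlog length assumption). -/
lemma part1_aux {S : List α} {f : ℕ → γ} {T₁ T₂ : List α} {y : γ} {d i₁ i₂ : ℕ}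
    (h1 : T₁ ≠ [])
    (hm1 : minYdUnique S f T₁ y d) (hm2 : minYdUnique S f T₂ y d)
    (ho1 : occAt S T₁ i₁) (ho2 : occAt S T₂ i₂)
    (hle : T₁.length ≤ T₂.length)
    (he : i₁ + T₁.length = i₂ + T₂.length) : T₁ = T₂ := by
  rcases eq_or_lt_of_le hle with heq | hlt
  · exact eq_of_same_end_same_len ho1 ho2 heq he
  · have hT1pos : 1 ≤ T₁.length := List.length_pos_iff.mpr h1
    have hTs : T₁ = T₂.drop (T₂.length - T₁.length) := suffix_eq ho1 ho2 hle he
    have hnot := not_unique_of_min_suffix hm2 (k := T₂.length - T₁.length)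
      (by omega) (by omega)
    rw [← hTs] at hnot
    exact absurd hm1.1 hnot

/-- Key lemma for the counting part: with possibly different colors but the same
delay, if the *first* occurrences of two minimally unique substrings end at the
same position, the substrings coincide (wlog length assumption). -/
lemma main_aux {S : List α} {f : ℕ → γ} {T₁ T₂ : List α} {y₁ y₂ : γ} {d : ℕ}
    (h1 : T₁ ≠ [])
    (hm1 : minYdUnique S f T₁ y₁ d) (hm2 : minYdUnique S f T₂ y₂ d)
    (hocc1 : ∃ i, occAt S T₁ i) (hocc2 : ∃ i, occAt S T₂ i)
    (hle : T₁.length ≤ T₂.length)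
    (hj : sInf {i | occAt S T₁ i} + T₁.length = sInf {i | occAt S T₂ i} + T₂.length) :
    T₁ = T₂ := by
  set i₁ := sInf {i | occAt S T₁ i} with hi₁def
  set i₂ := sInf {i | occAt S T₂ i} with hi₂def
  have o₁ : occAt S T₁ i₁ := Nat.sInf_mem hocc1
  have o₂ : occAt S T₂ i₂ := Nat.sInf_mem hocc2
  rcases eq_or_lt_of_le hle with heq | hlt
  · exact eq_of_same_end_same_len o₁ o₂ heq hj
  · have hT1pos : 1 ≤ T₁.length := List.length_pos_iff.mpr h1
    have hT2pos : 1 ≤ T₂.length := by omega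
    have hi1 : 1 ≤ i₁ := o₁.1
    have hi2 : 1 ≤ i₂ := o₂.1
    have hTs : T₁ = T₂.drop (T₂.length - T₁.length) := suffix_eq o₁ o₂ hle hj
    have hnot := not_unique_of_min_suffix hm2 (k := T₂.length - T₁.length)
      (by omega) (by omega)
    rw [← hTs] at hnot
    -- extract a witness occurrence of T₁ that is not (y₂,d)-good and in range
    unfold ydUnique at hnot
    push_neg at hnot
    obtain ⟨i₀, ho₀, hng, hr₀⟩ := hnot
    have hi0 : i₁ ≤ i₀ := Nat.sInf_le ho₀
    -- the color at the end of the first occurrence of T₁ (and of T₂)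
    have hin : i₁ + T₁.length - 1 + d ≤ S.length := by omega
    have hy1 : f (i₁ + T₁.length - 1 + d) = y₁ := color_forced hm1.1 o₁ hin
    have hin2 : i₂ + T₂.length - 1 + d ≤ S.length := by omega
    have hy2 : f (i₂ + T₂.length - 1 + d) = y₂ := color_forced hm2.1 o₂ hin2
    have hpos : i₂ + T₂.length - 1 + d = i₁ + T₁.length - 1 + d := by omega
    rw [hpos, hy1] at hy2
    -- but the witness occurrence forces f = y₁ as well, contradiction
    have hy0 : f (i₀ + T₁.length - 1 + d) = y₁ := color_forced hm1.1 ho₀ hr₀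
    exact absurd (hy0.trans hy2) hng

theorem minimal_count_quadratic (S : List α) (f : ℕ → γ) :
    (∀ (y : γ) (d j : ℕ) (T₁ T₂ : List α), T₁ ≠ [] → T₂ ≠ [] →
        minYdUnique S f T₁ y d → (∃ i, occAt S T₁ i ∧ i + T₁.length - 1 = j) →
        minYdUnique S f T₂ y d → (∃ i, occAt S T₂ i ∧ i + T₂.length - 1 = j) →
        T₁ = T₂) ∧
    {p : List α × ℕ | p.1 ≠ [] ∧ p.1 <:+: S ∧ p.2 ≤ S.length ∧
        ∃ y : γ, minYdUnique S f p.1 y p.2}.Finite ∧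
    {p : List α × ℕ | p.1 ≠ [] ∧ p.1 <:+: S ∧ p.2 ≤ S.length ∧
        ∃ y : γ, minYdUnique S f p.1 y p.2}.ncard ≤ (S.length + 1) * S.length := by
  set A : Set (List α × ℕ) := {p : List α × ℕ | p.1 ≠ [] ∧ p.1 <:+: S ∧ p.2 ≤ S.length ∧
      ∃ y : γ, minYdUnique S f p.1 y p.2} with hA
  refine ⟨?_, ?_⟩
  · -- part 1
    rintro y d j T₁ T₂ h1 h2 hm1 ⟨i₁, ho1, he1⟩ hm2 ⟨i₂, ho2, he2⟩
    have hp1 : 1 ≤ T₁.length := List.length_pos_iff.mpr h1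
    have hp2 : 1 ≤ T₂.length := List.length_pos_iff.mpr h2
    have hi1 : 1 ≤ i₁ := ho1.1
    have hi2 : 1 ≤ i₂ := ho2.1
    have he : i₁ + T₁.length = i₂ + T₂.length := by omega
    rcases le_total T₁.length T₂.length with h | h
    · exact part1_aux h1 hm1 hm2 ho1 ho2 h he
    · exact (part1_aux h2 hm2 hm1 ho2 ho1 h he.symm).symm
  · -- parts 2 and 3
    set g : List α × ℕ → ℕ × ℕ := fun p => (p.2, sInf {i | occAt S p.1 i} + p.1.length)
      with hg
    set F : Finset (ℕ × ℕ) :=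
      Finset.range (S.length + 1) ×ˢ Finset.Icc 2 (S.length + 1) with hF
    have hsub : g '' A ⊆ ↑F := by
      rintro _ ⟨⟨T, d⟩, ⟨hne, hinf, hd, y, hmin⟩, rfl⟩
      have hocc : ∃ i, occAt S T i := exists_occ_of_infix hinf
      have ho : occAt S T (sInf {i | occAt S T i}) := Nat.sInf_mem hocc
      have h1 : 1 ≤ sInf {i | occAt S T i} := ho.1
      have hTpos : 1 ≤ T.length := List.length_pos_iff.mpr hne
      have hend := occAt_end_le ho hne
      simp only [hF, g, Finset.coe_product, Set.mem_prod, Finset.mem_coe,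
        Finset.mem_range, Finset.mem_Icc]
      exact ⟨by omega, by omega, by omega⟩
    have hinj : Set.InjOn g A := by
      rintro ⟨T₁, d₁⟩ ⟨hne1, hinf1, hd1, y₁, hm1⟩ ⟨T₂, d₂⟩ ⟨hne2, hinf2, hd2, y₂, hm2⟩ hgeq
      simp only [g, Prod.mk.injEq] at hgeq
      obtain ⟨hdeq, hjeq⟩ := hgeq
      subst hdeq
      have hocc1 : ∃ i, occAt S T₁ i := exists_occ_of_infix hinf1
      have hocc2 : ∃ i, occAt S T₂ i := exists_occ_of_infix hinf2
      have hT : T₁ = T₂ := by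
        rcases le_total T₁.length T₂.length with h | h
        · exact main_aux hne1 hm1 hm2 hocc1 hocc2 h hjeq
        · exact (main_aux hne2 hm2 hm1 hocc2 hocc1 h hjeq.symm).symm
      simp [hT]
    have hfinimg : (g '' A).Finite := F.finite_toSet.subset hsub
    have hfin : A.Finite := Set.Finite.of_finite_image hfinimg hinj
    refine ⟨hfin, ?_⟩
    calc A.ncard = (g '' A).ncard := (Set.ncard_image_of_injOn hinj).symm
      _ ≤ (↑F : Set (ℕ × ℕ)).ncard := Set.ncard_le_ncard hsub F.finite_toSet
      _ = F.card := Set.ncard_coe_finset F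
      _ ≤ (S.length + 1) * S.length := by
          simp only [hF, Finset.card_product, Finset.card_range, Nat.card_Icc]
          have h2 : S.length + 1 + 1 - 2 = S.length := by omega
          rw [h2]
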